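/- There exist normal form, reversible Turing machines Inc and Dec with alphabet {#, 0, 1} such that: on input a number n written on the tape in little-endian binary (with n > 1 in the case of Dec), the machine behaves properly and halts with output n + 1 (for Inc), respectively n − 1 (for Dec), written in little-endian binary; both machines run for O(log n) steps and use at most |n| + 2 tape cells. -/

import Mathlib

open scoped Classical

noncomputable section

/-- Head movement directions of a generalised Turing machine: Left, Right, or None. -/
inductive Dir3 : Type
  | L
  | R
  | N
deriving DecidableEq

instance instFintypeDir3 : Fintype Dir3 :=
  ⟨{Dir3.L, Dir3.R, Dir3.N}, fun x => by cases x <;> decide⟩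

/-- Displacement of the head. -/
def Dir3.move : Dir3 → ℤ
  | .L => -1
  | .R => 1
  | .N => 0

/-- A generalised deterministic Turing machine over tape alphabet `Γ` (with blank
symbol `blank`) and state set `Q`, with initial state `q0`, final state `qf`, and
total transition function `δ : Q × Γ → Γ × Q × {L, R, N}`. -/
structure GTM (Γ Q : Type) where
  blank : Γ
  q0 : Q
  qf : Q
  δ : Q → Γ → Γ × Q × Dir3

/-- A configuration: internal state, head position, and tape contents. -/
structure GCfg (Γ Q : Type) where
  state : Q
  head : ℤ
  tape : ℤ → Γ

/-- The global step function of a generalised TM. -/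
def GTM.step {Γ Q : Type} (M : GTM Γ Q) (c : GCfg Γ Q) : GCfg Γ Q :=
  let t := M.δ c.state (c.tape c.head)
  ⟨t.2.1, c.head + t.2.2.move, Function.update c.tape c.head t.1⟩

/-- A TM is reversible if every configuration has at most one predecessor,
i.e. the global step function is injective. -/
def GTM.Reversible {Γ Q : Type} (M : GTM Γ Q) : Prop :=
  Function.Injective M.step

/-- Normal form: `δ(q_f, σ) = (σ, q₀, N)` for every `σ`. -/
def GTM.NormalForm {Γ Q : Type} (M : GTM Γ Q) : Prop :=
  ∀ σ : Γ, M.δ M.qf σ = (σ, M.q0, Dir3.N)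

/-- The configuration after `t` steps, started in state `q0` with head in the starting
cell `0` on initial tape `tape0`. -/
def GTM.run {Γ Q : Type} (M : GTM Γ Q) (tape0 : ℤ → Γ) (t : ℕ) : GCfg Γ Q :=
  M.step^[t] ⟨M.q0, 0, tape0⟩

/-- `M`, started on `tape0`, behaves properly and halts at time exactly `t` with final
tape `tapeF`: at time `t` it is in the final state for the first time, with the head
back in the starting cell and tape contents `tapeF`, and the head never moved to the
left of the starting cell. -/
def GTM.ProperRun {Γ Q : Type} (M : GTM Γ Q) (tape0 : ℤ → Γ) (t : ℕ)
    (tapeF : ℤ → Γ) : Prop :=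
  (M.run tape0 t).state = M.qf ∧
  (M.run tape0 t).head = 0 ∧
  (M.run tape0 t).tape = tapeF ∧
  (∀ t' < t, (M.run tape0 t').state ≠ M.qf) ∧
  (∀ t' ≤ t, 0 ≤ (M.run tape0 t').head)

/-- `M` uses at most `s` tape cells on this run: the head stays within `[0, s)`. -/
def GTM.SpaceBound {Γ Q : Type} (M : GTM Γ Q) (tape0 : ℤ → Γ) (t : ℕ) (s : ℕ) : Prop :=
  ∀ t' ≤ t, (M.run tape0 t').head < (s : ℤ)

/-- The tape holding the little-endian binary expansion of `n` (no leading zeros,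
zero represented by the empty string), over the alphabet `{#, 0, 1}` modelled as
`Option Bool` with `none = #`. -/
def binTape (n : ℕ) : ℤ → Option Bool := fun i =>
  if 0 ≤ i ∧ i < ((Nat.digits 2 n).length : ℤ)
  then some ((Nat.digits 2 n).getD i.toNat 0 == 1)
  else none

/-- The number of binary digits `|n|` of `n`. -/
def binLen (n : ℕ) : ℕ := (Nat.digits 2 n).length

/-! ### Auxiliary infrastructure for the proof -/

namespace IncDecAux

/-- One step of a machine on an explicit configuration. -/
lemma step_mk {Γ Q : Type} (M : GTM Γ Q) (q : Q) (h : ℤ) (T : ℤ → Γ) :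
    M.step ⟨q, h, T⟩ =
      ⟨(M.δ q (T h)).2.1, h + (M.δ q (T h)).2.2.move,
        Function.update T h (M.δ q (T h)).1⟩ := rfl

lemma run_succ {Γ Q : Type} (M : GTM Γ Q) (T0 : ℤ → Γ) (t : ℕ) :
    M.run T0 (t + 1) = M.step (M.run T0 t) :=
  Function.iterate_succ_apply' _ _ _

/-- If an explicit trajectory `cfg` starts at the initial configuration and is closed
under single steps up to time `t`, then the run coincides with it. -/
lemma run_eq_of_chain {Γ Q : Type} (M : GTM Γ Q) (T0 : ℤ → Γ)
    (cfg : ℕ → GCfg Γ Q) (t : ℕ)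
    (h0 : cfg 0 = ⟨M.q0, 0, T0⟩)
    (hs : ∀ i, i < t → M.step (cfg i) = cfg (i + 1)) :
    ∀ i, i ≤ t → M.run T0 i = cfg i := by
  intro i hi
  induction i with
  | zero => rw [h0]; rfl
  | succ j ih => rw [run_succ, ih (by omega), hs j (by omega)]

/-- The local sufficient criterion for reversibility: any two transitions into the
same target state use the same direction, and if they also write the same symbol then
they are the same transition. -/
lemma reversible_of_local {Γ Q : Type} [DecidableEq Γ] (M : GTM Γ Q)
    (h : ∀ q1 σ1 q2 σ2, (M.δ q1 σ1).2.1 = (M.δ q2 σ2).2.1 →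
      (M.δ q1 σ1).2.2 = (M.δ q2 σ2).2.2 ∧
      ((M.δ q1 σ1).1 = (M.δ q2 σ2).1 → q1 = q2 ∧ σ1 = σ2)) :
    M.Reversible := by
  rintro ⟨q1, h1, T1⟩ ⟨q2, h2, T2⟩ hc
  simp only [GTM.step, GCfg.mk.injEq] at hc
  obtain ⟨hq, hh, hT⟩ := hc
  obtain ⟨hd, hw⟩ := h q1 (T1 h1) q2 (T2 h2) hq
  have hyd : h1 = h2 := by rw [hd] at hh; omega
  subst hyd
  have hwr : (M.δ q1 (T1 h1)).1 = (M.δ q2 (T2 h1)).1 := by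
    have := congrFun hT h1
    simpa using this
  obtain ⟨hqq, hss⟩ := hw hwr
  simp only [GCfg.mk.injEq]
  refine ⟨hqq, trivial, ?_⟩
  funext x
  by_cases hx : x = h1
  · subst hx; exact hss
  · have := congrFun hT x
    simpa [Function.update, hx] using this

/-! ### The increment machine -/

inductive QInc : Type
  | q0 | S0 | S1 | T | T' | B' | B | B0 | W | W' | P | qf
deriving DecidableEq

open QInc in
instance : Fintype QInc :=
  ⟨⟨(([q0, S0, S1, T, T', B', B, B0, W, W', P, qf] : List QInc) : Multiset QInc), by decide⟩,
    fun x => by cases x <;> decide⟩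

open QInc in
def incδ : QInc → Option Bool → Option Bool × QInc × Dir3
  | q0, none             => (none,       S0, .R)
  | q0, some false       => (some false, S0, .R)
  | q0, some true        => (none,       S1, .R)
  | QInc.S0, σ           => (σ,          B0, .L)
  | S1, some true        => (some false, S1, .R)
  | S1, some false       => (some true,  T,  .R)
  | S1, none             => (some true,  T', .R)
  | QInc.T, some false   => (some false, B', .L)
  | QInc.T, some true    => (some true,  B', .L)
  | QInc.T, none         => (some true,  S0, .R)
  | T', none             => (none,       B', .L)
  | T', some false       => (some true,  S1, .R)
  | T', some true        => (some false, T,  .R)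
  | B', some true        => (some true,  B,  .L)
  | B', some false       => (none,       T,  .R)
  | B', none             => (some false, T', .R)
  | QInc.B, some false   => (some false, B,  .L)
  | QInc.B, none         => (some false, W,  .R)
  | QInc.B, some true    => (none,       T', .R)
  | B0, none             => (some true,  W', .R)
  | B0, some false       => (some true,  W,  .R)
  | B0, some true        => (none,       B,  .L)
  | QInc.W, some false   => (some false, P,  .L)
  | QInc.W, some true    => (some true,  P,  .L)
  | QInc.W, none         => (none,       W,  .R)
  | W', none             => (none,       P,  .L)
  | W', some false       => (some false, W', .R)
  | W', some true        => (none,       W', .R)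
  | QInc.P, σ            => (σ,          qf, .N)
  | QInc.qf, σ           => (σ,          q0, .N)

def IncM : GTM (Option Bool) QInc := ⟨none, .q0, .qf, incδ⟩

lemma IncM_rev : IncM.Reversible := reversible_of_local _ (by decide)

lemma IncM_nf : IncM.NormalForm := fun σ => rfl

/-! ### The decrement machine -/

inductive QDec : Type
  | q0 | S0 | S1 | Tp | B1 | B2 | B | B0 | W | P | qf
deriving DecidableEq

open QDec in
instance : Fintype QDec :=
  ⟨⟨(([q0, S0, S1, Tp, B1, B2, B, B0, W, P, qf] : List QDec) : Multiset QDec), by decide⟩,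
    fun x => by cases x <;> decide⟩

open QDec in
def decδ : QDec → Option Bool → Option Bool × QDec × Dir3
  | q0, some true        => (some true,  S0, .R)
  | q0, some false       => (none,       S1, .R)
  | q0, none             => (some false, S0, .R)
  | QDec.S0, σ           => (σ,          B0, .L)
  | S1, some false       => (some true,  S1, .R)
  | S1, some true        => (some true,  Tp, .R)
  | S1, none             => (none,       S0, .R)
  | Tp, some false       => (some false, B1, .L)
  | Tp, some true        => (some true,  B1, .L)
  | Tp, none             => (none,       B2, .L)
  | B1, some true        => (some false, B,  .L)
  | B1, some false       => (none,       Tp, .R)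
  | B1, none             => (none,       B1, .L)
  | B2, some true        => (none,       B,  .L)
  | B2, some false       => (some false, B2, .L)
  | B2, none             => (some true,  B2, .L)
  | QDec.B, some true    => (some true,  B,  .L)
  | QDec.B, none         => (some true,  W,  .R)
  | QDec.B, some false   => (none,       W,  .R)
  | B0, some true        => (some false, W,  .R)
  | B0, some false       => (some false, S1, .R)
  | B0, none             => (some false, Tp, .R)
  | QDec.W, σ            => (σ,          P,  .L)
  | QDec.P, σ            => (σ,          qf, .N)
  | QDec.qf, σ           => (σ,          q0, .N)

def DecM : GTM (Option Bool) QDec := ⟨none, .q0, .qf, decδ⟩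

lemma DecM_rev : DecM.Reversible := reversible_of_local _ (by decide)

lemma DecM_nf : DecM.NormalForm := fun σ => rfl

/-! ### Arithmetic about binary digits -/

lemma digits_getD (j n : ℕ) : (Nat.digits 2 n).getD j 0 = n / 2 ^ j % 2 := by
  induction j generalizing n with
  | zero =>
    rcases Nat.eq_zero_or_pos n with h | h
    · simp [h]
    · rw [Nat.digits_def' one_lt_two h]
      simp
  | succ j ih =>
    rcases Nat.eq_zero_or_pos n with h | h
    · simp [h]
    · rw [Nat.digits_def' one_lt_two h]
      have : n / 2 ^ (j + 1) = n / 2 / 2 ^ j := by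
        rw [Nat.div_div_eq_div_mul, pow_succ, mul_comm]
      simp only [List.getD_cons_succ, ih, this]

lemma binTape_apply (n : ℕ) (x : ℤ) :
    binTape n x = if 0 ≤ x ∧ x < (binLen n : ℤ)
      then some (decide (n / 2 ^ x.toNat % 2 = 1)) else none := by
  unfold binTape binLen
  split_ifs with h
  · congr 1
    rw [digits_getD]
    by_cases h1 : n / 2 ^ x.toNat % 2 = 1 <;> simp [h1]
  · rfl

lemma binTape_neg (n : ℕ) {x : ℤ} (hx : x < 0) : binTape n x = none := by
  rw [binTape_apply]; rw [if_neg]; omega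

lemma binTape_ge (n : ℕ) {x : ℤ} (hx : (binLen n : ℤ) ≤ x) : binTape n x = none := by
  rw [binTape_apply]; rw [if_neg]; omega

lemma binTape_in (n : ℕ) {x : ℤ} (h0 : 0 ≤ x) (h1 : x < (binLen n : ℤ)) :
    binTape n x = some (decide (n / 2 ^ x.toNat % 2 = 1)) := by
  rw [binTape_apply, if_pos ⟨h0, h1⟩]

lemma binLen_eq (n : ℕ) (hn : n ≠ 0) : binLen n = Nat.log 2 n + 1 :=
  Nat.digits_len 2 n one_lt_two hn

lemma binLen_pow_mul (k : ℕ) {m : ℕ} (hm : 0 < m) :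
    binLen (2 ^ k * m) = k + binLen m := by
  unfold binLen
  rw [Nat.digits_base_pow_mul one_lt_two hm]
  simp

lemma binLen_pow_sub_one (k : ℕ) : binLen (2 ^ k - 1) = k := by
  induction k with
  | zero => simp [binLen]
  | succ k ih =>
    have h2 : 2 ^ (k + 1) = 2 * 2 ^ k := by rw [pow_succ, mul_comm]
    have hpos : 0 < 2 ^ k := Nat.pow_pos (by norm_num)
    have hpos' : 0 < 2 ^ (k + 1) - 1 := by omega
    unfold binLen
    rw [Nat.digits_def' one_lt_two hpos']
    have hdiv : (2 ^ (k + 1) - 1) / 2 = 2 ^ k - 1 := by omega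
    rw [hdiv]
    simpa [binLen] using ih

lemma div_pred {d A : ℕ} (hd : 0 < d) (hA : 0 < A) : (d * A - 1) / d = A - 1 := by
  have hdA : d * (A - 1) + d = d * A := by
    have h2 : d * (A - 1) + d = d * ((A - 1) + 1) := by ring
    rw [h2]
    congr 1
    omega
  have h1 : d * A - 1 = d * (A - 1) + (d - 1) := by omega
  rw [h1, Nat.mul_add_div hd, Nat.div_eq_of_lt (by omega)]
  omega

lemma div_pow_pred_of_odd {m : ℕ} (hm : Odd m) {j : ℕ} (hj : 1 ≤ j) :
    (m - 1) / 2 ^ j = m / 2 ^ j := by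
  obtain ⟨a, rfl⟩ := hm
  have h2 : 2 ^ j = 2 * 2 ^ (j - 1) := by
    rw [← pow_succ']
    congr 1
    omega
  rw [h2, ← Nat.div_div_eq_div_mul, ← Nat.div_div_eq_div_mul]
  have e1 : (2 * a + 1 - 1) / 2 = a := by omega
  have e2 : (2 * a + 1) / 2 = a := by omega
  rw [e1, e2]

section Pair

variable {k m : ℕ} (hk : 1 ≤ k) (hm : Odd m)

include hm in
/-- Division facts for `N0 = 2^k*m - 1`. -/
lemma N0_div {i : ℕ} (hik : i ≤ k) : (2 ^ k * m - 1) / 2 ^ i = 2 ^ (k - i) * m - 1 := by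
  have h1 : 2 ^ k * m = 2 ^ i * (2 ^ (k - i) * m) := by
    rw [← mul_assoc, ← pow_add]
    congr 2
    omega
  have hm0 : 0 < m := hm.pos
  rw [h1, div_pred (Nat.pow_pos (by norm_num))
    (Nat.mul_pos (Nat.pow_pos (by norm_num)) hm0)]

include hm in
lemma N0_bit_lt {i : ℕ} (hik : i < k) : (2 ^ k * m - 1) / 2 ^ i % 2 = 1 := by
  rw [N0_div hm (by omega)]
  have h1 : 2 ^ (k - i) * m = 2 * (2 ^ (k - i - 1) * m) := by
    rw [← mul_assoc]
    congr 1
    rw [← pow_succ']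
    congr 1
    omega
  have h2 : 0 < 2 ^ (k - i - 1) * m :=
    Nat.mul_pos (Nat.pow_pos (by norm_num)) hm.pos
  rw [h1]
  omega

include hm in
lemma N0_bit_k : (2 ^ k * m - 1) / 2 ^ k % 2 = 0 := by
  rw [N0_div hm le_rfl]
  simp only [Nat.sub_self, pow_zero, one_mul]
  obtain ⟨a, rfl⟩ := hm
  omega

include hm in
lemma N0_bit_gt {i : ℕ} (hik : k < i) :
    (2 ^ k * m - 1) / 2 ^ i % 2 = (2 ^ k * m) / 2 ^ i % 2 := by
  have h1 : 2 ^ i = 2 ^ k * 2 ^ (i - k) := by rw [← pow_add]; congr 1; omega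
  rw [h1, ← Nat.div_div_eq_div_mul, ← Nat.div_div_eq_div_mul, N0_div hm le_rfl]
  simp only [Nat.sub_self, pow_zero, one_mul]
  rw [Nat.mul_div_cancel_left _ (Nat.pow_pos (by norm_num))]
  rw [div_pow_pred_of_odd hm (by omega)]

lemma N1_bit_lt {i : ℕ} (hik : i < k) : (2 ^ k * m) / 2 ^ i % 2 = 0 := by
  have h1 : 2 ^ k * m = 2 ^ i * (2 ^ (k - i) * m) := by
    rw [← mul_assoc, ← pow_add]; congr 2; omega
  rw [h1, Nat.mul_div_cancel_left _ (Nat.pow_pos (by norm_num))]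
  have h2 : 2 ^ (k - i) * m = 2 * (2 ^ (k - i - 1) * m) := by
    rw [← mul_assoc]
    congr 1
    rw [← pow_succ']
    congr 1
    omega
  rw [h2]
  omega

include hm in
lemma N1_bit_k : (2 ^ k * m) / 2 ^ k % 2 = 1 := by
  rw [Nat.mul_div_cancel_left _ (Nat.pow_pos (by norm_num))]
  obtain ⟨a, rfl⟩ := hm
  omega

include hm in
lemma binLen_N1_ge : k + 1 ≤ binLen (2 ^ k * m) := by
  have hm0 : m ≠ 0 := hm.pos.ne'
  rw [binLen_pow_mul k hm.pos, binLen_eq m hm0]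
  omega

include hm in
lemma binLen_m_ge (h3 : 3 ≤ m) : 2 ≤ binLen m := by
  rw [binLen_eq m (by omega)]
  have : 1 ≤ Nat.log 2 m := Nat.le_log_of_pow_le one_lt_two (by omega)
  omega

include hk hm in
lemma binLen_N0_ge : k ≤ binLen (2 ^ k * m - 1) := by
  have hm0 : 0 < m := hm.pos
  have h1 : 2 ^ k - 1 ≤ 2 ^ k * m - 1 := by
    have : 2 ^ k ≤ 2 ^ k * m := Nat.le_mul_of_pos_right _ hm0
    omega
  calc k = binLen (2 ^ k - 1) := (binLen_pow_sub_one k).symm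
    _ ≤ binLen (2 ^ k * m - 1) := by
        unfold binLen
        exact Nat.le_digits_len_le 2 _ _ h1

include hk hm in
lemma binLen_N0_eq_N1 (h3 : 3 ≤ m) : binLen (2 ^ k * m - 1) = binLen (2 ^ k * m) := by
  have hm0 : 0 < m := hm.pos
  have hN1 : 2 ≤ 2 ^ k * m := by
    have h2 : 2 ≤ 2 ^ k := by
      calc 2 = 2 ^ 1 := (pow_one 2).symm
      _ ≤ 2 ^ k := Nat.pow_le_pow_right (by norm_num) hk
    calc 2 ≤ 2 ^ k := h2
    _ ≤ 2 ^ k * m := Nat.le_mul_of_pos_right _ hm0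
  set L := Nat.log 2 (2 ^ k * m) with hL
  have hub : 2 ^ k * m < 2 ^ (L + 1) := Nat.lt_pow_succ_log_self one_lt_two _
  have hlb : 2 ^ L ≤ 2 ^ k * m := Nat.pow_log_le_self 2 (by omega)
  have hne : 2 ^ k * m ≠ 2 ^ L := by
    intro he
    have hdvd : m ∣ 2 ^ L := Dvd.intro_left _ he
    obtain ⟨j, _, rfl⟩ := (Nat.dvd_prime_pow Nat.prime_two).mp hdvd
    rcases Nat.eq_zero_or_pos j with hj | hj
    · simp [hj] at h3
    · obtain ⟨a, ha⟩ := hm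
      have : 2 ∣ 2 ^ j := dvd_pow_self 2 (by omega)
      omega
  have hlog : Nat.log 2 (2 ^ k * m - 1) = L :=
    Nat.log_eq_of_pow_le_of_lt_pow (by omega) (by omega)
  rw [binLen_eq _ (by omega), binLen_eq _ (by omega), hlog]

end Pair

/-- For even `e ≥ 2`, `e+1` has the same binary length. -/
lemma binLen_succ_even {e : ℕ} (he : 2 ∣ e) (h2 : 2 ≤ e) : binLen (e + 1) = binLen e := by
  set L := Nat.log 2 e with hL
  have hub : e < 2 ^ (L + 1) := Nat.lt_pow_succ_log_self one_lt_two _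
  have hlb : 2 ^ L ≤ e := Nat.pow_log_le_self 2 (by omega)
  have hne : e + 1 ≠ 2 ^ (L + 1) := by
    intro he1
    have : 2 ∣ 2 ^ (L + 1) := dvd_pow_self 2 (by omega)
    omega
  have hlog : Nat.log 2 (e + 1) = L :=
    Nat.log_eq_of_pow_le_of_lt_pow (by omega) (by omega)
  rw [binLen_eq _ (by omega), binLen_eq _ (by omega), hlog]

lemma binLen_two_le {e : ℕ} (h2 : 2 ≤ e) : 2 ≤ binLen e := by
  rw [binLen_eq _ (by omega)]
  have : 1 ≤ Nat.log 2 e := Nat.le_log_of_pow_le one_lt_two (by omega)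
  omega

/-- Bits above position 0 agree for even `e` and `e+1`. -/
lemma bits_succ_even {e : ℕ} (he : 2 ∣ e) {j : ℕ} (hj : 1 ≤ j) :
    (e + 1) / 2 ^ j % 2 = e / 2 ^ j % 2 := by
  have := div_pow_pred_of_odd (m := e + 1) ⟨e / 2, by omega⟩ hj
  simp only [Nat.add_sub_cancel] at this
  rw [this]

/-! ### Tape-level lemmas -/

lemma binTape_true (n : ℕ) {x : ℤ} (h0 : 0 ≤ x) (h1 : x < (binLen n : ℤ))
    (hb : n / 2 ^ x.toNat % 2 = 1) : binTape n x = some true := by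
  rw [binTape_in n h0 h1, hb]
  rfl

lemma binTape_false (n : ℕ) {x : ℤ} (h0 : 0 ≤ x) (h1 : x < (binLen n : ℤ))
    (hb : n / 2 ^ x.toNat % 2 = 0) : binTape n x = some false := by
  rw [binTape_in n h0 h1, hb]
  rfl

lemma update_rd {T : ℤ → Option Bool} {h : ℤ} {σ : Option Bool} (hr : T h = σ) :
    Function.update T h σ = T := by
  rw [← hr]
  exact Function.update_eq_self h T

/-- Intermediate tape during the rightward sweep: marker `#` in cell 0, cells
`1..j` overwritten with `b`, rest as in `binTape n`. -/
def Atape (n : ℕ) (b : Bool) (j : ℕ) : ℤ → Option Bool := fun x =>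
  if x = 0 then none
  else if 1 ≤ x ∧ x ≤ (j : ℤ) then some b
  else binTape n x

/-- Intermediate tape during the leftward sweep: final tape with marker in cell 0. -/
def Mtape (r : ℕ) : ℤ → Option Bool := Function.update (binTape r) 0 none

lemma Atape_zero (n : ℕ) (b : Bool) :
    Function.update (binTape n) 0 none = Atape n b 0 := by
  funext x
  rw [Function.update_apply]
  simp only [Atape, Nat.cast_zero]
  split_ifs <;> first | rfl | omega

lemma Atape_step (n : ℕ) (b : Bool) {i : ℕ} (hi : 1 ≤ i) :
    Function.update (Atape n b (i - 1)) (i : ℤ) (some b) = Atape n b i := by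
  funext x
  rw [Function.update_apply]
  simp only [Atape]
  split_ifs <;> first | rfl | omega

lemma Atape_rd (n : ℕ) (b : Bool) {j : ℕ} {x : ℤ} (h0 : x ≠ 0)
    (hx : x < 1 ∨ (j : ℤ) < x) : Atape n b j x = binTape n x := by
  simp only [Atape]
  rw [if_neg h0, if_neg (by omega)]

lemma Atape_rd' (n : ℕ) (b : Bool) {j : ℕ} {x : ℤ} (h1 : 1 ≤ x) (hx : x ≤ (j : ℤ)) :
    Atape n b j x = some b := by
  simp only [Atape]
  rw [if_neg (by omega), if_pos (by omega)]

lemma Mtape_rd {r : ℕ} {x : ℤ} (hx : x ≠ 0) : Mtape r x = binTape r x := by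
  simp only [Mtape]
  rw [Function.update_apply, if_neg hx]

lemma Mtape_rd0 (r : ℕ) : Mtape r 0 = none := by
  simp only [Mtape]
  rw [Function.update_apply, if_pos rfl]

lemma Mtape_to_T {r : ℕ} {c : Option Bool} (h : binTape r 0 = c) :
    Function.update (Mtape r) 0 c = binTape r := by
  rw [Mtape, Function.update_idem, ← h, Function.update_eq_self]

section PairTapes

variable {k m : ℕ} (hk : 1 ≤ k) (hm : Odd m)

include hk hm in
lemma T_N0_lt {x : ℤ} (h0 : 0 ≤ x) (hx : x < (k : ℤ)) :
    binTape (2 ^ k * m - 1) x = some true := by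
  apply binTape_true _ h0
  · have := binLen_N0_ge hk hm
    omega
  · exact N0_bit_lt hm (by omega)

include hk hm in
lemma T_N0_k3 (h3 : 3 ≤ m) : binTape (2 ^ k * m - 1) (k : ℤ) = some false := by
  apply binTape_false _ (by positivity)
  · rw [binLen_N0_eq_N1 hk hm h3, binLen_pow_mul k hm.pos]
    have := binLen_m_ge hm h3
    push_cast
    omega
  · have : ((k : ℤ)).toNat = k := by omega
    rw [this]
    exact N0_bit_k hm

lemma T_N0_k1 : binTape (2 ^ k * 1 - 1) (k : ℤ) = none := by
  apply binTape_ge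
  rw [mul_one, binLen_pow_sub_one k]

include hk hm in
lemma T_N0_succ3 (h3 : 3 ≤ m) : ∃ b, binTape (2 ^ k * m - 1) ((k : ℤ) + 1) = some b := by
  refine ⟨_, binTape_in _ (by positivity) ?_⟩
  rw [binLen_N0_eq_N1 hk hm h3, binLen_pow_mul k hm.pos]
  have := binLen_m_ge hm h3
  push_cast
  omega

include hm in
lemma T_N1_lt {x : ℤ} (h0 : 0 ≤ x) (hx : x < (k : ℤ)) :
    binTape (2 ^ k * m) x = some false := by
  apply binTape_false _ h0
  · have := binLen_N1_ge (k := k) hm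
    omega
  · exact N1_bit_lt (by omega)

include hm in
lemma T_N1_k : binTape (2 ^ k * m) (k : ℤ) = some true := by
  apply binTape_true _ (by positivity)
  · have := binLen_N1_ge (k := k) hm
    omega
  · have : ((k : ℤ)).toNat = k := by omega
    rw [this]
    exact N1_bit_k hm

include hk hm in
lemma T_N1_gt {x : ℤ} (hx : (k : ℤ) < x) :
    binTape (2 ^ k * m) x = binTape (2 ^ k * m - 1) x := by
  have hm13 : m = 1 ∨ 3 ≤ m := by obtain ⟨a, ha⟩ := hm; omega
  rcases hm13 with h1 | h3
  · subst h1
    have l1 : (binLen (2 ^ k * 1) : ℤ) ≤ x := by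
      rw [binLen_pow_mul k (by norm_num)]
      have hb1 : binLen 1 = 1 := by simp [binLen]
      rw [hb1]
      push_cast
      omega
    have l0 : (binLen (2 ^ k * 1 - 1) : ℤ) ≤ x := by
      rw [mul_one, binLen_pow_sub_one k]
      omega
    rw [binTape_ge _ l1, binTape_ge _ l0]
  · have hlen : binLen (2 ^ k * m - 1) = binLen (2 ^ k * m) := binLen_N0_eq_N1 hk hm h3
    by_cases h : 0 ≤ x ∧ x < (binLen (2 ^ k * m) : ℤ)
    · have hb : (2 ^ k * m - 1) / 2 ^ x.toNat % 2 = (2 ^ k * m) / 2 ^ x.toNat % 2 :=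
        N0_bit_gt hm (by omega)
      rw [binTape_in _ h.1 h.2, binTape_in _ h.1 (by rw [hlen]; exact h.2), hb]
    · rw [binTape_ge _ (by omega), binTape_ge _ (by rw [hlen]; omega)]

include hk hm in
lemma T_N1_one : ∃ b, binTape (2 ^ k * m) 1 = some b := by
  rcases (by omega : k = 1 ∨ 2 ≤ k) with h1 | h2
  · subst h1
    exact ⟨true, by exact_mod_cast T_N1_k hm⟩
  · exact ⟨false, T_N1_lt hm (by norm_num) (by push_cast; omega)⟩

include hk hm in
lemma Atape_to_M_inc :
    Function.update (Atape (2 ^ k * m - 1) false (k - 1)) (k : ℤ) (some true)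
      = Mtape (2 ^ k * m) := by
  funext x
  rw [Function.update_apply]
  by_cases hx : x = (k : ℤ)
  · rw [if_pos hx, hx, Mtape_rd (by omega), T_N1_k hm]
  · rw [if_neg hx]
    by_cases hx0 : x = 0
    · subst hx0
      rw [Mtape_rd0]
      simp [Atape]
    · rw [Mtape_rd hx0]
      by_cases hxneg : x < 0
      · rw [Atape_rd _ _ hx0 (by omega), binTape_neg _ hxneg, binTape_neg _ hxneg]
      · by_cases hxk : x ≤ (k : ℤ) - 1
        · rw [Atape_rd' _ _ (by omega) (by omega), T_N1_lt hm (by omega) (by omega)]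
        · rw [Atape_rd _ _ hx0 (by omega), T_N1_gt hk hm (by omega)]

include hk hm in
lemma Atape_to_M_dec3 (h3 : 3 ≤ m) :
    Function.update (Atape (2 ^ k * m) true (k - 1)) (k : ℤ) (some false)
      = Mtape (2 ^ k * m - 1) := by
  funext x
  rw [Function.update_apply]
  by_cases hx : x = (k : ℤ)
  · rw [if_pos hx, hx, Mtape_rd (by omega), T_N0_k3 hk hm h3]
  · rw [if_neg hx]
    by_cases hx0 : x = 0
    · subst hx0
      rw [Mtape_rd0]
      simp [Atape]
    · rw [Mtape_rd hx0]
      by_cases hxneg : x < 0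
      · rw [Atape_rd _ _ hx0 (by omega), binTape_neg _ hxneg, binTape_neg _ hxneg]
      · by_cases hxk : x ≤ (k : ℤ) - 1
        · rw [Atape_rd' _ _ (by omega) (by omega), T_N0_lt hk hm (by omega) (by omega)]
        · rw [Atape_rd _ _ hx0 (by omega), (T_N1_gt hk hm (by omega)).symm]

include hk in
lemma Atape_to_M_dec1 :
    Function.update (Atape (2 ^ k * 1) true (k - 1)) (k : ℤ) none
      = Mtape (2 ^ k * 1 - 1) := by
  have hm1 : Odd 1 := odd_one
  funext x
  rw [Function.update_apply]
  by_cases hx : x = (k : ℤ)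
  · rw [if_pos hx, hx, Mtape_rd (by omega), T_N0_k1]
  · rw [if_neg hx]
    by_cases hx0 : x = 0
    · subst hx0
      rw [Mtape_rd0]
      simp [Atape]
    · rw [Mtape_rd hx0]
      by_cases hxneg : x < 0
      · rw [Atape_rd _ _ hx0 (by omega), binTape_neg _ hxneg, binTape_neg _ hxneg]
      · by_cases hxk : x ≤ (k : ℤ) - 1
        · rw [Atape_rd' _ _ (by omega) (by omega), T_N0_lt hk hm1 (by omega) (by omega)]
        · rw [Atape_rd _ _ hx0 (by omega), (T_N1_gt hk hm1 (by omega)).symm]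

end PairTapes

/-! ### Tape lemmas for the carry-free cases -/

lemma binTape_zero_bit {e : ℕ} (he : 2 ∣ e) (h2 : 2 ≤ e) : binTape e 0 = some false := by
  apply binTape_false _ le_rfl
  · rw [binLen_eq _ (by omega)]
    push_cast
    omega
  · simpa using Nat.even_iff.mp (even_iff_two_dvd.mpr he)

lemma binTape_zero_bit' {e : ℕ} (he : ¬ 2 ∣ e) (h1 : 1 ≤ e) : binTape e 0 = some true := by
  apply binTape_true _ le_rfl
  · rw [binLen_eq _ (by omega)]
    push_cast
    omega
  · simpa using Nat.odd_iff.mp (Nat.odd_iff.mpr (by omega))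

lemma binTape_succ_even {e : ℕ} (he : 2 ∣ e) (h2 : 2 ≤ e) :
    binTape (e + 1) = Function.update (binTape e) 0 (some true) := by
  funext x
  rw [Function.update_apply]
  by_cases hx : x = 0
  · rw [if_pos hx, hx]
    exact binTape_zero_bit' (by omega) (by omega)
  · rw [if_neg hx]
    by_cases hxneg : x < 0
    · rw [binTape_neg _ hxneg, binTape_neg _ hxneg]
    · by_cases h : 0 ≤ x ∧ x < (binLen e : ℤ)
      · have hb : (e + 1) / 2 ^ x.toNat % 2 = e / 2 ^ x.toNat % 2 :=
          bits_succ_even he (by omega)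
        rw [binTape_in _ h.1 h.2, binTape_in _ h.1 (by rw [binLen_succ_even he h2]; exact h.2),
          hb]
      · rw [binTape_ge _ (by rw [binLen_succ_even he h2]; omega), binTape_ge _ (by omega)]

lemma binTape_one : binTape 1 = Function.update (binTape 0) 0 (some true) := by
  funext x
  rw [Function.update_apply]
  by_cases hx : x = 0
  · rw [if_pos hx, hx]
    apply binTape_true _ le_rfl <;> simp [binLen]
  · rw [if_neg hx]
    rw [binTape_apply, binTape_apply]
    have h0 : binLen 0 = 0 := by simp [binLen]
    have h1 : binLen 1 = 1 := by simp [binLen]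
    rw [h0, h1, if_neg (by omega), if_neg (by omega)]

lemma binTape_zero (x : ℤ) : binTape 0 x = none := by
  rw [binTape_apply]
  have h0 : binLen 0 = 0 := by simp [binLen]
  rw [h0, if_neg (by omega)]

/-! ### Single-step rule application -/

lemma step_rule {Γ Q : Type} {M : GTM Γ Q} {q : Q} {hd : ℤ} {T : ℤ → Γ} {σ w : Γ}
    {q' : Q} {d : Dir3} (hr : T hd = σ) (hδ : M.δ q σ = (w, q', d)) :
    M.step ⟨q, hd, T⟩ = ⟨q', hd + d.move, Function.update T hd w⟩ := by
  rw [step_mk, hr, hδ]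

lemma incδ_S0 (σ : Option Bool) : IncM.δ QInc.S0 σ = (σ, QInc.B0, Dir3.L) := by
  rcases σ with _ | b
  · rfl
  · cases b <;> rfl

lemma incδ_P (σ : Option Bool) : IncM.δ QInc.P σ = (σ, QInc.qf, Dir3.N) := by
  rcases σ with _ | b
  · rfl
  · cases b <;> rfl

lemma incδ_T (b : Bool) : IncM.δ QInc.T (some b) = (some b, QInc.B', Dir3.L) := by
  cases b <;> rfl

lemma incδ_W (b : Bool) : IncM.δ QInc.W (some b) = (some b, QInc.P, Dir3.L) := by
  cases b <;> rfl

lemma decδ_S0 (σ : Option Bool) : DecM.δ QDec.S0 σ = (σ, QDec.B0, Dir3.L) := by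
  rcases σ with _ | b
  · rfl
  · cases b <;> rfl

lemma decδ_P (σ : Option Bool) : DecM.δ QDec.P σ = (σ, QDec.qf, Dir3.N) := by
  rcases σ with _ | b
  · rfl
  · cases b <;> rfl

lemma decδ_W (σ : Option Bool) : DecM.δ QDec.W σ = (σ, QDec.P, Dir3.L) := by
  rcases σ with _ | b
  · rfl
  · cases b <;> rfl

lemma decδ_Tp (b : Bool) : DecM.δ QDec.Tp (some b) = (some b, QDec.B1, Dir3.L) := by
  cases b <;> rfl

/-! ### The trajectory of `Inc` on odd input -/

/-- The trajectory of the increment machine on an odd input with `k` trailing ones. -/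
def cfgI (n k : ℕ) (qt : QInc) (i : ℕ) : GCfg (Option Bool) QInc :=
  if i = 0 then ⟨QInc.q0, 0, binTape n⟩
  else if i ≤ k then ⟨QInc.S1, (i : ℤ), Atape n false (i - 1)⟩
  else if i = k + 1 then ⟨qt, (k : ℤ) + 1, Mtape (n + 1)⟩
  else if i = k + 2 then ⟨QInc.B', (k : ℤ), Mtape (n + 1)⟩
  else if i ≤ 2 * k + 2 then ⟨QInc.B, ((2 * k + 2 - i : ℕ) : ℤ), Mtape (n + 1)⟩
  else if i = 2 * k + 3 then ⟨QInc.W, 1, binTape (n + 1)⟩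
  else if i = 2 * k + 4 then ⟨QInc.P, 0, binTape (n + 1)⟩
  else ⟨QInc.qf, 0, binTape (n + 1)⟩

lemma cfgI_0 (n k : ℕ) (qt : QInc) : cfgI n k qt 0 = ⟨QInc.q0, 0, binTape n⟩ := rfl

lemma cfgI_S1 (n k : ℕ) (qt : QInc) {i : ℕ} (h1 : 1 ≤ i) (h2 : i ≤ k) :
    cfgI n k qt i = ⟨QInc.S1, (i : ℤ), Atape n false (i - 1)⟩ := by
  unfold cfgI
  rw [if_neg (by omega), if_pos h2]

lemma cfgI_T (n k : ℕ) (qt : QInc) :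
    cfgI n k qt (k + 1) = ⟨qt, (k : ℤ) + 1, Mtape (n + 1)⟩ := by
  unfold cfgI
  rw [if_neg (by omega), if_neg (by omega), if_pos rfl]

lemma cfgI_B' (n k : ℕ) (qt : QInc) :
    cfgI n k qt (k + 2) = ⟨QInc.B', (k : ℤ), Mtape (n + 1)⟩ := by
  unfold cfgI
  rw [if_neg (by omega), if_neg (by omega), if_neg (by omega), if_pos rfl]

lemma cfgI_B (n k : ℕ) (qt : QInc) {i : ℕ} (h1 : k + 3 ≤ i) (h2 : i ≤ 2 * k + 2) :
    cfgI n k qt i = ⟨QInc.B, ((2 * k + 2 - i : ℕ) : ℤ), Mtape (n + 1)⟩ := by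
  unfold cfgI
  rw [if_neg (by omega), if_neg (by omega), if_neg (by omega), if_neg (by omega), if_pos h2]

lemma cfgI_W (n k : ℕ) (qt : QInc) :
    cfgI n k qt (2 * k + 3) = ⟨QInc.W, 1, binTape (n + 1)⟩ := by
  unfold cfgI
  rw [if_neg (by omega), if_neg (by omega), if_neg (by omega), if_neg (by omega),
    if_neg (by omega), if_pos rfl]

lemma cfgI_P (n k : ℕ) (qt : QInc) :
    cfgI n k qt (2 * k + 4) = ⟨QInc.P, 0, binTape (n + 1)⟩ := by
  unfold cfgI
  rw [if_neg (by omega), if_neg (by omega), if_neg (by omega), if_neg (by omega),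
    if_neg (by omega), if_neg (by omega), if_pos rfl]

lemma cfgI_qf (n k : ℕ) (qt : QInc) {i : ℕ} (h1 : 2 * k + 5 ≤ i) :
    cfgI n k qt i = ⟨QInc.qf, 0, binTape (n + 1)⟩ := by
  unfold cfgI
  rw [if_neg (by omega), if_neg (by omega), if_neg (by omega), if_neg (by omega),
    if_neg (by omega), if_neg (by omega), if_neg (by omega)]

lemma GCfg_eq {Γ Q : Type} {q q' : Q} {h h' : ℤ} {T T' : ℤ → Γ}
    (hq : q = q') (hh : h = h') (hT : T = T') :
    (⟨q, h, T⟩ : GCfg Γ Q) = ⟨q', h', T'⟩ := by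
  subst hq; subst hh; subst hT; rfl

lemma chainI {k m n : ℕ} (hk : 1 ≤ k) (hm : Odd m) (hn : n + 1 = 2 ^ k * m) :
    ∀ i, i < 2 * k + 5 →
      IncM.step (cfgI n k (if m = 1 then QInc.T' else QInc.T) i)
        = cfgI n k (if m = 1 then QInc.T' else QInc.T) (i + 1) := by
  have hn0 : n = 2 ^ k * m - 1 := by omega
  have hm13 : m = 1 ∨ 3 ≤ m := by obtain ⟨a, ha⟩ := hm; omega
  set qt := if m = 1 then QInc.T' else QInc.T with hqt
  intro i hi
  by_cases h0 : i = 0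
  · subst h0
    have hr : binTape n 0 = some true := by
      rw [hn0]; exact T_N0_lt hk hm le_rfl (by omega)
    rw [cfgI_0, cfgI_S1 n k qt le_rfl hk,
      step_rule hr (show IncM.δ QInc.q0 (some true) = (none, QInc.S1, Dir3.R) from rfl)]
    exact GCfg_eq rfl (by simp only [Dir3.move]; try omega) (Atape_zero n false)
  by_cases hS : 1 ≤ i ∧ i + 1 ≤ k
  · have hr : Atape n false (i - 1) (i : ℤ) = some true := by
      rw [Atape_rd n false (by omega) (by right; omega), hn0]
      exact T_N0_lt hk hm (by omega) (by omega)
    rw [cfgI_S1 n k qt (by omega) (by omega), cfgI_S1 n k qt (by omega) (by omega),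
      step_rule hr
        (show IncM.δ QInc.S1 (some true) = (some false, QInc.S1, Dir3.R) from rfl)]
    refine GCfg_eq rfl (by simp only [Dir3.move]; try omega) ?_
    have := Atape_step n false hS.1
    simpa using this
  by_cases hK : i = k
  · rw [hK]
    rw [cfgI_S1 n k qt (by omega) le_rfl, cfgI_T n k qt]
    have hrd : Atape n false (k - 1) (k : ℤ) = binTape n (k : ℤ) :=
      Atape_rd n false (by omega) (by right; omega)
    have htape : Function.update (Atape n false (k - 1)) (k : ℤ) (some true)
        = Mtape (n + 1) := by
      rw [hn0, show 2 ^ k * m - 1 + 1 = 2 ^ k * m from by omega]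
      exact Atape_to_M_inc hk hm
    rcases hm13 with h1 | h3
    · have hq1 : qt = QInc.T' := by rw [hqt, if_pos h1]
      have hr : Atape n false (k - 1) (k : ℤ) = none := by
        rw [hrd, hn0, h1]
        exact T_N0_k1
      rw [step_rule hr
        (show IncM.δ QInc.S1 none = (some true, QInc.T', Dir3.R) from rfl)]
      exact GCfg_eq hq1.symm (by simp only [Dir3.move]; try omega) htape
    · have hq1 : qt = QInc.T := by rw [hqt, if_neg (by omega)]
      have hr : Atape n false (k - 1) (k : ℤ) = some false := by
        rw [hrd, hn0]
        exact T_N0_k3 hk hm h3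
      rw [step_rule hr
        (show IncM.δ QInc.S1 (some false) = (some true, QInc.T, Dir3.R) from rfl)]
      exact GCfg_eq hq1.symm (by simp only [Dir3.move]; try omega) htape
  by_cases hK1 : i = k + 1
  · subst hK1
    rw [cfgI_T n k qt, cfgI_B' n k qt]
    rcases hm13 with h1 | h3
    · have hq1 : qt = QInc.T' := by rw [hqt, if_pos h1]
      have hr : Mtape (n + 1) ((k : ℤ) + 1) = none := by
        rw [Mtape_rd (by omega)]
        apply binTape_ge
        rw [hn, h1, binLen_pow_mul k (by norm_num)]
        have hb1 : binLen 1 = 1 := by simp [binLen]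
        rw [hb1]
        push_cast
        omega
      rw [hq1, step_rule hr
        (show IncM.δ QInc.T' none = (none, QInc.B', Dir3.L) from rfl)]
      exact GCfg_eq rfl (by simp only [Dir3.move]; try omega) (update_rd hr)
    · have hq1 : qt = QInc.T := by rw [hqt, if_neg (by omega)]
      obtain ⟨b, hb⟩ := T_N0_succ3 hk hm h3
      have hr : Mtape (n + 1) ((k : ℤ) + 1) = some b := by
        rw [Mtape_rd (by omega), hn, T_N1_gt hk hm (by omega), ← hn0, hn0]
        exact hb
      rw [hq1, step_rule hr (incδ_T b)]
      exact GCfg_eq rfl (by simp only [Dir3.move]; try omega) (update_rd hr)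
  by_cases hK2 : i = k + 2
  · subst hK2
    have hr : Mtape (n + 1) (k : ℤ) = some true := by
      rw [Mtape_rd (by omega), hn]
      exact T_N1_k hm
    rw [cfgI_B' n k qt, cfgI_B n k qt (by omega) (by omega), step_rule hr
      (show IncM.δ QInc.B' (some true) = (some true, QInc.B, Dir3.L) from rfl)]
    exact GCfg_eq rfl (by simp only [Dir3.move]; try omega) (update_rd hr)
  by_cases hB : k + 3 ≤ i ∧ i ≤ 2 * k + 1
  · have hr : Mtape (n + 1) ((2 * k + 2 - i : ℕ) : ℤ) = some false := by
      rw [Mtape_rd (by omega), hn]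
      exact T_N1_lt hm (by omega) (by omega)
    rw [cfgI_B n k qt (by omega) (by omega), cfgI_B n k qt (by omega) (by omega),
      step_rule hr
        (show IncM.δ QInc.B (some false) = (some false, QInc.B, Dir3.L) from rfl)]
    exact GCfg_eq rfl (by simp only [Dir3.move]; try omega) (update_rd hr)
  by_cases hB2 : i = 2 * k + 2
  · subst hB2
    have hz : ((2 * k + 2 - (2 * k + 2) : ℕ) : ℤ) = 0 := by omega
    have hr : Mtape (n + 1) ((2 * k + 2 - (2 * k + 2) : ℕ) : ℤ) = none := by
      rw [hz]; exact Mtape_rd0 (n + 1)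
    rw [cfgI_B n k qt (by omega) (by omega), cfgI_W n k qt, step_rule hr
      (show IncM.δ QInc.B none = (some false, QInc.W, Dir3.R) from rfl)]
    refine GCfg_eq rfl (by simp only [Dir3.move]; try omega) ?_
    rw [hz]
    apply Mtape_to_T
    rw [hn]
    exact T_N1_lt hm le_rfl (by omega)
  by_cases hW : i = 2 * k + 3
  · subst hW
    obtain ⟨b, hb⟩ := T_N1_one hk hm
    have hr : binTape (n + 1) 1 = some b := by rw [hn]; exact hb
    rw [cfgI_W n k qt, cfgI_P n k qt, step_rule hr (incδ_W b)]
    exact GCfg_eq rfl (by simp only [Dir3.move]; try omega) (update_rd hr)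
  · have hP : i = 2 * k + 4 := by omega
    subst hP
    have hr : binTape (n + 1) 0 = some false := by
      rw [hn]; exact T_N1_lt hm le_rfl (by omega)
    rw [cfgI_P n k qt, cfgI_qf n k qt (by omega), step_rule hr (incδ_P (some false))]
    exact GCfg_eq rfl (by simp only [Dir3.move]; try omega) (update_rd hr)

/-! ### The trajectory of `Dec` on even input -/

/-- The trajectory of the decrement machine on an even input `n = 2^k·m`. -/
def cfgD (n k : ℕ) (qt : QDec) (i : ℕ) : GCfg (Option Bool) QDec :=
  if i = 0 then ⟨QDec.q0, 0, binTape n⟩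
  else if i ≤ k then ⟨QDec.S1, (i : ℤ), Atape n true (i - 1)⟩
  else if i = k + 1 then ⟨QDec.Tp, (k : ℤ) + 1, Atape n true (k - 1)⟩
  else if i = k + 2 then ⟨qt, (k : ℤ), Atape n true (k - 1)⟩
  else if i ≤ 2 * k + 2 then ⟨QDec.B, ((2 * k + 2 - i : ℕ) : ℤ), Mtape (n - 1)⟩
  else if i = 2 * k + 3 then ⟨QDec.W, 1, binTape (n - 1)⟩
  else if i = 2 * k + 4 then ⟨QDec.P, 0, binTape (n - 1)⟩
  else ⟨QDec.qf, 0, binTape (n - 1)⟩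

lemma cfgD_0 (n k : ℕ) (qt : QDec) : cfgD n k qt 0 = ⟨QDec.q0, 0, binTape n⟩ := rfl

lemma cfgD_S1 (n k : ℕ) (qt : QDec) {i : ℕ} (h1 : 1 ≤ i) (h2 : i ≤ k) :
    cfgD n k qt i = ⟨QDec.S1, (i : ℤ), Atape n true (i - 1)⟩ := by
  unfold cfgD
  rw [if_neg (by omega), if_pos h2]

lemma cfgD_Tp (n k : ℕ) (qt : QDec) :
    cfgD n k qt (k + 1) = ⟨QDec.Tp, (k : ℤ) + 1, Atape n true (k - 1)⟩ := by
  unfold cfgD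
  rw [if_neg (by omega), if_neg (by omega), if_pos rfl]

lemma cfgD_B1 (n k : ℕ) (qt : QDec) :
    cfgD n k qt (k + 2) = ⟨qt, (k : ℤ), Atape n true (k - 1)⟩ := by
  unfold cfgD
  rw [if_neg (by omega), if_neg (by omega), if_neg (by omega), if_pos rfl]

lemma cfgD_B (n k : ℕ) (qt : QDec) {i : ℕ} (h1 : k + 3 ≤ i) (h2 : i ≤ 2 * k + 2) :
    cfgD n k qt i = ⟨QDec.B, ((2 * k + 2 - i : ℕ) : ℤ), Mtape (n - 1)⟩ := by
  unfold cfgD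
  rw [if_neg (by omega), if_neg (by omega), if_neg (by omega), if_neg (by omega), if_pos h2]

lemma cfgD_W (n k : ℕ) (qt : QDec) :
    cfgD n k qt (2 * k + 3) = ⟨QDec.W, 1, binTape (n - 1)⟩ := by
  unfold cfgD
  rw [if_neg (by omega), if_neg (by omega), if_neg (by omega), if_neg (by omega),
    if_neg (by omega), if_pos rfl]

lemma cfgD_P (n k : ℕ) (qt : QDec) :
    cfgD n k qt (2 * k + 4) = ⟨QDec.P, 0, binTape (n - 1)⟩ := by
  unfold cfgD
  rw [if_neg (by omega), if_neg (by omega), if_neg (by omega), if_neg (by omega),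
    if_neg (by omega), if_neg (by omega), if_pos rfl]

lemma cfgD_qf (n k : ℕ) (qt : QDec) {i : ℕ} (h1 : 2 * k + 5 ≤ i) :
    cfgD n k qt i = ⟨QDec.qf, 0, binTape (n - 1)⟩ := by
  unfold cfgD
  rw [if_neg (by omega), if_neg (by omega), if_neg (by omega), if_neg (by omega),
    if_neg (by omega), if_neg (by omega), if_neg (by omega)]

lemma chainD {k m n : ℕ} (hk : 1 ≤ k) (hm : Odd m) (hn : n = 2 ^ k * m) :
    ∀ i, i < 2 * k + 5 →
      DecM.step (cfgD n k (if m = 1 then QDec.B2 else QDec.B1) i)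
        = cfgD n k (if m = 1 then QDec.B2 else QDec.B1) (i + 1) := by
  have hpos : 1 ≤ 2 ^ k * m :=
    Nat.one_le_iff_ne_zero.mpr (Nat.mul_ne_zero (by positivity) hm.pos.ne')
  have hn0 : n - 1 = 2 ^ k * m - 1 := by omega
  have hm13 : m = 1 ∨ 3 ≤ m := by obtain ⟨a, ha⟩ := hm; omega
  set qt := if m = 1 then QDec.B2 else QDec.B1 with hqt
  intro i hi
  by_cases h0 : i = 0
  · subst h0
    have hr : binTape n 0 = some false := by
      rw [hn]; exact T_N1_lt hm le_rfl (by omega)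
    rw [cfgD_0, cfgD_S1 n k qt le_rfl hk,
      step_rule hr (show DecM.δ QDec.q0 (some false) = (none, QDec.S1, Dir3.R) from rfl)]
    exact GCfg_eq rfl (by simp only [Dir3.move]; try omega) (Atape_zero n true)
  by_cases hS : 1 ≤ i ∧ i + 1 ≤ k
  · have hr : Atape n true (i - 1) (i : ℤ) = some false := by
      rw [Atape_rd n true (by omega) (by right; omega), hn]
      exact T_N1_lt hm (by omega) (by omega)
    rw [cfgD_S1 n k qt (by omega) (by omega), cfgD_S1 n k qt (by omega) (by omega),
      step_rule hr
        (show DecM.δ QDec.S1 (some false) = (some true, QDec.S1, Dir3.R) from rfl)]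
    refine GCfg_eq rfl (by simp only [Dir3.move]; try omega) ?_
    have := Atape_step n true hS.1
    simpa using this
  by_cases hK : i = k
  · rw [hK]
    have hr : Atape n true (k - 1) (k : ℤ) = some true := by
      rw [Atape_rd n true (by omega) (by right; omega), hn]
      exact T_N1_k hm
    rw [cfgD_S1 n k qt (by omega) le_rfl, cfgD_Tp n k qt,
      step_rule hr
        (show DecM.δ QDec.S1 (some true) = (some true, QDec.Tp, Dir3.R) from rfl)]
    exact GCfg_eq rfl (by simp only [Dir3.move]; try omega) (update_rd hr)
  by_cases hK1 : i = k + 1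
  · subst hK1
    rw [cfgD_Tp n k qt, cfgD_B1 n k qt]
    rcases hm13 with h1 | h3
    · have hq1 : qt = QDec.B2 := by rw [hqt, if_pos h1]
      have hr : Atape n true (k - 1) ((k : ℤ) + 1) = none := by
        rw [Atape_rd n true (by omega) (by right; omega), hn, h1]
        apply binTape_ge
        rw [binLen_pow_mul k (by norm_num)]
        have hb1 : binLen 1 = 1 := by simp [binLen]
        rw [hb1]
        push_cast
        omega
      rw [hq1, step_rule hr
        (show DecM.δ QDec.Tp none = (none, QDec.B2, Dir3.L) from rfl)]
      exact GCfg_eq rfl (by simp only [Dir3.move]; try omega) (update_rd hr)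
    · have hq1 : qt = QDec.B1 := by rw [hqt, if_neg (by omega)]
      have hlen : (k : ℤ) + 1 < (binLen (2 ^ k * m) : ℤ) := by
        rw [binLen_pow_mul k hm.pos]
        have := binLen_m_ge hm h3
        push_cast
        omega
      obtain ⟨b, hb⟩ : ∃ b, binTape n ((k : ℤ) + 1) = some b :=
        ⟨_, by rw [hn]; exact binTape_in _ (by positivity) hlen⟩
      have hr : Atape n true (k - 1) ((k : ℤ) + 1) = some b := by
        rw [Atape_rd n true (by omega) (by right; omega)]
        exact hb
      rw [hq1, step_rule hr (decδ_Tp b)]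
      exact GCfg_eq rfl (by simp only [Dir3.move]; try omega) (update_rd hr)
  by_cases hK2 : i = k + 2
  · subst hK2
    rw [cfgD_B1 n k qt, cfgD_B n k qt (by omega) (by omega)]
    have hr : Atape n true (k - 1) (k : ℤ) = some true := by
      rw [Atape_rd n true (by omega) (by right; omega), hn]
      exact T_N1_k hm
    rcases hm13 with h1 | h3
    · have hq1 : qt = QDec.B2 := by rw [hqt, if_pos h1]
      rw [hq1, step_rule hr
        (show DecM.δ QDec.B2 (some true) = (none, QDec.B, Dir3.L) from rfl)]
      refine GCfg_eq rfl (by simp only [Dir3.move]; try omega) ?_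
      rw [hn0, hn, h1]
      exact Atape_to_M_dec1 hk
    · have hq1 : qt = QDec.B1 := by rw [hqt, if_neg (by omega)]
      rw [hq1, step_rule hr
        (show DecM.δ QDec.B1 (some true) = (some false, QDec.B, Dir3.L) from rfl)]
      refine GCfg_eq rfl (by simp only [Dir3.move]; try omega) ?_
      rw [hn0, hn]
      exact Atape_to_M_dec3 hk hm h3
  by_cases hB : k + 3 ≤ i ∧ i ≤ 2 * k + 1
  · have hr : Mtape (n - 1) ((2 * k + 2 - i : ℕ) : ℤ) = some true := by
      rw [Mtape_rd (by omega), hn0]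
      exact T_N0_lt hk hm (by omega) (by omega)
    rw [cfgD_B n k qt (by omega) (by omega), cfgD_B n k qt (by omega) (by omega),
      step_rule hr
        (show DecM.δ QDec.B (some true) = (some true, QDec.B, Dir3.L) from rfl)]
    exact GCfg_eq rfl (by simp only [Dir3.move]; try omega) (update_rd hr)
  by_cases hB2 : i = 2 * k + 2
  · subst hB2
    have hz : ((2 * k + 2 - (2 * k + 2) : ℕ) : ℤ) = 0 := by omega
    have hr : Mtape (n - 1) ((2 * k + 2 - (2 * k + 2) : ℕ) : ℤ) = none := by
      rw [hz]; exact Mtape_rd0 (n - 1)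
    rw [cfgD_B n k qt (by omega) (by omega), cfgD_W n k qt, step_rule hr
      (show DecM.δ QDec.B none = (some true, QDec.W, Dir3.R) from rfl)]
    refine GCfg_eq rfl (by simp only [Dir3.move]; try omega) ?_
    rw [hz]
    apply Mtape_to_T
    rw [hn0]
    exact T_N0_lt hk hm le_rfl (by omega)
  by_cases hW : i = 2 * k + 3
  · subst hW
    rw [cfgD_W n k qt, cfgD_P n k qt,
      step_rule (rfl : binTape (n - 1) 1 = binTape (n - 1) 1)
        (decδ_W (binTape (n - 1) 1))]
    exact GCfg_eq rfl (by simp only [Dir3.move]; try omega) (update_rd rfl)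
  · have hP : i = 2 * k + 4 := by omega
    subst hP
    have hr : binTape (n - 1) 0 = some true := by
      rw [hn0]; exact T_N0_lt hk hm le_rfl (by omega)
    rw [cfgD_P n k qt, cfgD_qf n k qt (by omega), step_rule hr (decδ_P (some true))]
    exact GCfg_eq rfl (by simp only [Dir3.move]; try omega) (update_rd hr)

/-! ### Trajectory of `Inc` on even (or zero) input -/

def cfgIE (n : ℕ) (q3 : QInc) : ℕ → GCfg (Option Bool) QInc
  | 0 => ⟨QInc.q0, 0, binTape n⟩
  | 1 => ⟨QInc.S0, 1, binTape n⟩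
  | 2 => ⟨QInc.B0, 0, binTape n⟩
  | 3 => ⟨q3, 1, binTape (n + 1)⟩
  | 4 => ⟨QInc.P, 0, binTape (n + 1)⟩
  | _ + 5 => ⟨QInc.qf, 0, binTape (n + 1)⟩

lemma chainIE {n : ℕ} (hn : 2 ∣ n) :
    ∀ i, i < 5 →
      IncM.step (cfgIE n (if n = 0 then QInc.W' else QInc.W) i)
        = cfgIE n (if n = 0 then QInc.W' else QInc.W) (i + 1) := by
  set q3 := if n = 0 then QInc.W' else QInc.W with hq3
  have hr0 : n = 0 ∨ (2 ∣ n ∧ 2 ≤ n) := by omega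
  intro i hi
  interval_cases i
  · show IncM.step ⟨QInc.q0, 0, binTape n⟩ = ⟨QInc.S0, 1, binTape n⟩
    rcases hr0 with h | h
    · have hr : binTape n 0 = none := by rw [h]; exact binTape_zero 0
      rw [step_rule hr (show IncM.δ QInc.q0 none = (none, QInc.S0, Dir3.R) from rfl)]
      exact GCfg_eq rfl (by simp only [Dir3.move]; try omega) (update_rd hr)
    · have hr : binTape n 0 = some false := binTape_zero_bit h.1 h.2
      rw [step_rule hr
        (show IncM.δ QInc.q0 (some false) = (some false, QInc.S0, Dir3.R) from rfl)]
      exact GCfg_eq rfl (by simp only [Dir3.move]; try omega) (update_rd hr)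
  · show IncM.step ⟨QInc.S0, 1, binTape n⟩ = ⟨QInc.B0, 0, binTape n⟩
    rw [step_rule (rfl : binTape n 1 = binTape n 1) (incδ_S0 (binTape n 1))]
    exact GCfg_eq rfl (by simp only [Dir3.move]; try omega) (update_rd rfl)
  · show IncM.step ⟨QInc.B0, 0, binTape n⟩ = ⟨q3, 1, binTape (n + 1)⟩
    rcases hr0 with h | h
    · have hr : binTape n 0 = none := by rw [h]; exact binTape_zero 0
      have hq : q3 = QInc.W' := by rw [hq3, if_pos h]
      rw [step_rule hr
        (show IncM.δ QInc.B0 none = (some true, QInc.W', Dir3.R) from rfl)]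
      refine GCfg_eq hq.symm (by simp only [Dir3.move]; try omega) ?_
      rw [h]
      exact binTape_one.symm
    · have hr : binTape n 0 = some false := binTape_zero_bit h.1 h.2
      have hq : q3 = QInc.W := by rw [hq3, if_neg (by omega)]
      rw [step_rule hr
        (show IncM.δ QInc.B0 (some false) = (some true, QInc.W, Dir3.R) from rfl)]
      refine GCfg_eq hq.symm (by simp only [Dir3.move]; try omega) ?_
      exact (binTape_succ_even h.1 h.2).symm
  · show IncM.step ⟨q3, 1, binTape (n + 1)⟩ = ⟨QInc.P, 0, binTape (n + 1)⟩
    rcases hr0 with h | h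
    · have hq : q3 = QInc.W' := by rw [hq3, if_pos h]
      have hr : binTape (n + 1) 1 = none := by
        rw [h]
        apply binTape_ge
        have hb1 : binLen 1 = 1 := by simp [binLen]
        rw [hb1]
        norm_num
      rw [hq, step_rule hr
        (show IncM.δ QInc.W' none = (none, QInc.P, Dir3.L) from rfl)]
      exact GCfg_eq rfl (by simp only [Dir3.move]; try omega) (update_rd hr)
    · have hq : q3 = QInc.W := by rw [hq3, if_neg (by omega)]
      obtain ⟨b, hb⟩ : ∃ b, binTape (n + 1) 1 = some b := by
        refine ⟨_, binTape_in _ (by norm_num) ?_⟩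
        rw [binLen_succ_even h.1 h.2]
        have := binLen_two_le h.2
        push_cast
        omega
      rw [hq, step_rule hb (incδ_W b)]
      exact GCfg_eq rfl (by simp only [Dir3.move]; try omega) (update_rd hb)
  · show IncM.step ⟨QInc.P, 0, binTape (n + 1)⟩ = ⟨QInc.qf, 0, binTape (n + 1)⟩
    have hr : binTape (n + 1) 0 = some true := binTape_zero_bit' (by omega) (by omega)
    rw [step_rule hr (incδ_P (some true))]
    exact GCfg_eq rfl (by simp only [Dir3.move]; try omega) (update_rd hr)

/-! ### Trajectory of `Dec` on odd input -/

def cfgDO (n : ℕ) : ℕ → GCfg (Option Bool) QDec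
  | 0 => ⟨QDec.q0, 0, binTape n⟩
  | 1 => ⟨QDec.S0, 1, binTape n⟩
  | 2 => ⟨QDec.B0, 0, binTape n⟩
  | 3 => ⟨QDec.W, 1, binTape (n - 1)⟩
  | 4 => ⟨QDec.P, 0, binTape (n - 1)⟩
  | _ + 5 => ⟨QDec.qf, 0, binTape (n - 1)⟩

lemma chainDO {n : ℕ} (hn : ¬ 2 ∣ n) (h3 : 3 ≤ n) :
    ∀ i, i < 5 → DecM.step (cfgDO n i) = cfgDO n (i + 1) := by
  have he : 2 ∣ (n - 1) := by omega
  have he2 : 2 ≤ n - 1 := by omega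
  have hsub : n - 1 + 1 = n := by omega
  intro i hi
  interval_cases i
  · show DecM.step ⟨QDec.q0, 0, binTape n⟩ = ⟨QDec.S0, 1, binTape n⟩
    have hr : binTape n 0 = some true := binTape_zero_bit' hn (by omega)
    rw [step_rule hr
      (show DecM.δ QDec.q0 (some true) = (some true, QDec.S0, Dir3.R) from rfl)]
    exact GCfg_eq rfl (by simp only [Dir3.move]; try omega) (update_rd hr)
  · show DecM.step ⟨QDec.S0, 1, binTape n⟩ = ⟨QDec.B0, 0, binTape n⟩
    rw [step_rule (rfl : binTape n 1 = binTape n 1) (decδ_S0 (binTape n 1))]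
    exact GCfg_eq rfl (by simp only [Dir3.move]; try omega) (update_rd rfl)
  · show DecM.step ⟨QDec.B0, 0, binTape n⟩ = ⟨QDec.W, 1, binTape (n - 1)⟩
    have hr : binTape n 0 = some true := binTape_zero_bit' hn (by omega)
    rw [step_rule hr
      (show DecM.δ QDec.B0 (some true) = (some false, QDec.W, Dir3.R) from rfl)]
    refine GCfg_eq rfl (by simp only [Dir3.move]; try omega) ?_
    have h1 : binTape n = Function.update (binTape (n - 1)) 0 (some true) := by
      conv_lhs => rw [← hsub]
      exact binTape_succ_even he he2
    rw [h1, Function.update_idem]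
    exact update_rd (binTape_zero_bit he he2)
  · show DecM.step ⟨QDec.W, 1, binTape (n - 1)⟩ = ⟨QDec.P, 0, binTape (n - 1)⟩
    rw [step_rule (rfl : binTape (n - 1) 1 = binTape (n - 1) 1)
      (decδ_W (binTape (n - 1) 1))]
    exact GCfg_eq rfl (by simp only [Dir3.move]; try omega) (update_rd rfl)
  · show DecM.step ⟨QDec.P, 0, binTape (n - 1)⟩ = ⟨QDec.qf, 0, binTape (n - 1)⟩
    have hr : binTape (n - 1) 0 = some false := binTape_zero_bit he he2
    rw [step_rule hr (decδ_P (some false))]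
    exact GCfg_eq rfl (by simp only [Dir3.move]; try omega) (update_rd hr)

/-! ### Packaging the four cases -/

lemma cfgI_state_ne {n k : ℕ} {qt : QInc} (hqt : qt ≠ QInc.qf) {i : ℕ}
    (hi : i < 2 * k + 5) : (cfgI n k qt i).state ≠ QInc.qf := by
  unfold cfgI
  split_ifs <;> first | exact hqt | (exfalso; omega) | simp

lemma cfgI_head {n k : ℕ} (qt : QInc) {i : ℕ} (hi : i ≤ 2 * k + 5) :
    0 ≤ (cfgI n k qt i).head ∧ (cfgI n k qt i).head ≤ (k : ℤ) + 1 := by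
  unfold cfgI
  split_ifs <;> dsimp only <;> constructor <;> omega

lemma cfgD_state_ne {n k : ℕ} {qt : QDec} (hqt : qt ≠ QDec.qf) {i : ℕ}
    (hi : i < 2 * k + 5) : (cfgD n k qt i).state ≠ QDec.qf := by
  unfold cfgD
  split_ifs <;> first | exact hqt | (exfalso; omega) | simp

lemma cfgD_head {n k : ℕ} (qt : QDec) {i : ℕ} (hi : i ≤ 2 * k + 5) :
    0 ≤ (cfgD n k qt i).head ∧ (cfgD n k qt i).head ≤ (k : ℤ) + 1 := by
  unfold cfgD
  split_ifs <;> dsimp only <;> constructor <;> omega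

lemma inc_odd {k m n : ℕ} (hk : 1 ≤ k) (hm : Odd m) (hn : n + 1 = 2 ^ k * m) :
    IncM.ProperRun (binTape n) (2 * k + 5) (binTape (n + 1)) ∧
    IncM.SpaceBound (binTape n) (2 * k + 5) (binLen n + 2) := by
  have hrun : ∀ i, i ≤ 2 * k + 5 → IncM.run (binTape n) i
      = cfgI n k (if m = 1 then QInc.T' else QInc.T) i :=
    run_eq_of_chain IncM (binTape n) _ _ (cfgI_0 n k _) (chainI hk hm hn)
  have hqt : (if m = 1 then QInc.T' else QInc.T) ≠ QInc.qf := by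
    split_ifs <;> simp
  have hn0 : n = 2 ^ k * m - 1 := by omega
  have hkb : k ≤ binLen n := hn0 ▸ binLen_N0_ge hk hm
  constructor
  · refine ⟨?_, ?_, ?_, ?_, ?_⟩
    · rw [hrun _ le_rfl, cfgI_qf _ _ _ le_rfl]
      rfl
    · rw [hrun _ le_rfl, cfgI_qf _ _ _ le_rfl]
    · rw [hrun _ le_rfl, cfgI_qf _ _ _ le_rfl]
    · intro t' ht'
      rw [hrun t' (by omega)]
      exact cfgI_state_ne hqt ht'
    · intro t' ht'
      rw [hrun t' ht']
      exact (cfgI_head _ ht').1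
  · intro t' ht'
    rw [hrun t' ht']
    have := (cfgI_head (n := n) (if m = 1 then QInc.T' else QInc.T) ht').2
    push_cast
    omega

lemma dec_even {k m n : ℕ} (hk : 1 ≤ k) (hm : Odd m) (hn : n = 2 ^ k * m) :
    DecM.ProperRun (binTape n) (2 * k + 5) (binTape (n - 1)) ∧
    DecM.SpaceBound (binTape n) (2 * k + 5) (binLen n + 2) := by
  have hrun : ∀ i, i ≤ 2 * k + 5 → DecM.run (binTape n) i
      = cfgD n k (if m = 1 then QDec.B2 else QDec.B1) i :=
    run_eq_of_chain DecM (binTape n) _ _ (cfgD_0 n k _) (chainD hk hm hn)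
  have hqt : (if m = 1 then QDec.B2 else QDec.B1) ≠ QDec.qf := by
    split_ifs <;> simp
  have hkb : k ≤ binLen n := by
    rw [hn]
    have := binLen_N1_ge (k := k) hm
    omega
  constructor
  · refine ⟨?_, ?_, ?_, ?_, ?_⟩
    · rw [hrun _ le_rfl, cfgD_qf _ _ _ le_rfl]
      rfl
    · rw [hrun _ le_rfl, cfgD_qf _ _ _ le_rfl]
    · rw [hrun _ le_rfl, cfgD_qf _ _ _ le_rfl]
    · intro t' ht'
      rw [hrun t' (by omega)]
      exact cfgD_state_ne hqt ht'
    · intro t' ht'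
      rw [hrun t' ht']
      exact (cfgD_head _ ht').1
  · intro t' ht'
    rw [hrun t' ht']
    have := (cfgD_head (n := n) (if m = 1 then QDec.B2 else QDec.B1) ht').2
    push_cast
    omega

lemma cfgIE_state_ne {n : ℕ} {q3 : QInc} (hq3 : q3 ≠ QInc.qf) {i : ℕ} (hi : i < 5) :
    (cfgIE n q3 i).state ≠ QInc.qf := by
  interval_cases i <;> first | exact hq3 | exact fun h => QInc.noConfusion h

lemma cfgIE_head {n : ℕ} (q3 : QInc) (i : ℕ) :
    0 ≤ (cfgIE n q3 i).head ∧ (cfgIE n q3 i).head ≤ 1 := by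
  rcases i with _ | _ | _ | _ | _ | j <;> constructor <;> norm_num [cfgIE]

lemma inc_even {n : ℕ} (hn : 2 ∣ n) :
    IncM.ProperRun (binTape n) 5 (binTape (n + 1)) ∧
    IncM.SpaceBound (binTape n) 5 (binLen n + 2) := by
  have hrun : ∀ i, i ≤ 5 → IncM.run (binTape n) i
      = cfgIE n (if n = 0 then QInc.W' else QInc.W) i :=
    run_eq_of_chain IncM (binTape n) _ _ rfl (chainIE hn)
  have hq3 : (if n = 0 then QInc.W' else QInc.W) ≠ QInc.qf := by
    split_ifs <;> simp
  constructor
  · refine ⟨?_, ?_, ?_, ?_, ?_⟩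
    · rw [hrun _ le_rfl]; rfl
    · rw [hrun _ le_rfl]; rfl
    · rw [hrun _ le_rfl]; rfl
    · intro t' ht'
      rw [hrun t' (by omega)]
      exact cfgIE_state_ne hq3 ht'
    · intro t' ht'
      rw [hrun t' ht']
      exact (cfgIE_head _ t').1
  · intro t' ht'
    rw [hrun t' ht']
    have := (cfgIE_head (n := n) (if n = 0 then QInc.W' else QInc.W) t').2
    push_cast
    omega

lemma cfgDO_head (n : ℕ) (i : ℕ) :
    0 ≤ (cfgDO n i).head ∧ (cfgDO n i).head ≤ 1 := by
  rcases i with _ | _ | _ | _ | _ | j <;> constructor <;> norm_num [cfgDO]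

lemma dec_odd {n : ℕ} (hn : ¬ 2 ∣ n) (h3 : 3 ≤ n) :
    DecM.ProperRun (binTape n) 5 (binTape (n - 1)) ∧
    DecM.SpaceBound (binTape n) 5 (binLen n + 2) := by
  have hrun : ∀ i, i ≤ 5 → DecM.run (binTape n) i = cfgDO n i :=
    run_eq_of_chain DecM (binTape n) _ _ rfl (chainDO hn h3)
  constructor
  · refine ⟨?_, ?_, ?_, ?_, ?_⟩
    · rw [hrun _ le_rfl]; rfl
    · rw [hrun _ le_rfl]; rfl
    · rw [hrun _ le_rfl]; rfl
    · intro t' ht'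
      rw [hrun t' (by omega)]
      interval_cases t' <;> exact fun h => QDec.noConfusion h
    · intro t' ht'
      rw [hrun t' ht']
      exact (cfgDO_head n t').1
  · intro t' ht'
    rw [hrun t' ht']
    have := (cfgDO_head n t').2
    push_cast
    omega

end IncDecAux

/-- **Increment and decrement machines** (Lemma `incrementer`).  There are normal
form, reversible Turing machines `Inc` and `Dec` with alphabet `{#, 0, 1}` which, on
input a little-endian binary number `n` (with `n > 1` for `Dec`), behave properly and
halt with output `n + 1`, respectively `n − 1`, in little-endian binary; both run for
`O(log n)` steps and use at most `|n| + 2` tape cells. -/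
theorem inc_dec_machines :
    ∃ (QI : Type) (_ : Fintype QI) (Inc : GTM (Option Bool) QI)
      (QD : Type) (_ : Fintype QD) (Dec : GTM (Option Bool) QD) (C : ℕ),
      Inc.blank = none ∧ Dec.blank = none ∧
      Inc.Reversible ∧ Inc.NormalForm ∧
      Dec.Reversible ∧ Dec.NormalForm ∧
      (∀ n : ℕ, ∃ t : ℕ,
        t ≤ C * (Nat.log 2 n + 2) ∧
        Inc.ProperRun (binTape n) t (binTape (n + 1)) ∧
        Inc.SpaceBound (binTape n) t (binLen n + 2)) ∧
      (∀ n : ℕ, 1 < n → ∃ t : ℕ,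
        t ≤ C * (Nat.log 2 n + 2) ∧
        Dec.ProperRun (binTape n) t (binTape (n - 1)) ∧
        Dec.SpaceBound (binTape n) t (binLen n + 2)) := by
  refine ⟨IncDecAux.QInc, inferInstance, IncDecAux.IncM,
    IncDecAux.QDec, inferInstance, IncDecAux.DecM, 7,
    rfl, rfl, IncDecAux.IncM_rev, IncDecAux.IncM_nf,
    IncDecAux.DecM_rev, IncDecAux.DecM_nf, ?_, ?_⟩
  · intro n
    by_cases hpar : 2 ∣ n
    · refine ⟨5, by omega, (IncDecAux.inc_even hpar).1, (IncDecAux.inc_even hpar).2⟩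
    · obtain ⟨k, m, hm, hkm⟩ := Nat.exists_eq_two_pow_mul_odd (n := n + 1) (by omega)
      have hk : 1 ≤ k := by
        rcases Nat.eq_zero_or_pos k with h | h
        · exfalso
          obtain ⟨a, ha⟩ := hm
          subst h
          simp only [pow_zero, one_mul] at hkm
          omega
        · exact h
      refine ⟨2 * k + 5, ?_, (IncDecAux.inc_odd hk hm hkm).1,
        (IncDecAux.inc_odd hk hm hkm).2⟩
      have hn0 : n = 2 ^ k * m - 1 := by omega
      have hkb : k ≤ binLen n := hn0 ▸ IncDecAux.binLen_N0_ge hk hm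
      have hlen : binLen n = Nat.log 2 n + 1 := IncDecAux.binLen_eq n (by omega)
      omega
  · intro n hn1
    by_cases hpar : 2 ∣ n
    · obtain ⟨k, m, hm, hkm⟩ := Nat.exists_eq_two_pow_mul_odd (n := n) (by omega)
      have hk : 1 ≤ k := by
        rcases Nat.eq_zero_or_pos k with h | h
        · exfalso
          obtain ⟨a, ha⟩ := hm
          subst h
          simp only [pow_zero, one_mul] at hkm
          omega
        · exact h
      refine ⟨2 * k + 5, ?_, (IncDecAux.dec_even hk hm hkm).1,
        (IncDecAux.dec_even hk hm hkm).2⟩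
      have h2k : 2 ^ k ≤ n := by
        rw [hkm]
        exact Nat.le_mul_of_pos_right _ hm.pos
      have hkb : k ≤ Nat.log 2 n := Nat.le_log_of_pow_le one_lt_two h2k
      omega
    · exact ⟨5, by omega, (IncDecAux.dec_odd hpar (by omega)).1,
        (IncDecAux.dec_odd hpar (by omega)).2⟩

end
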